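/- Let X_1,…,X_n ∈ {0,1} be independent random variables and let f : {0,1}^n → ℝ be self-bounding, with Z = f(X_1,…,X_n). Then for every δ > 0, Pr[Z ≥ (1+δ) E[Z]] ≤ (e^δ / (1+δ)^{1+δ})^{E[Z]}. -/

import Mathlib

open MeasureTheory ProbabilityTheory Finset

/-- A function `f : {0,1}ⁿ → ℝ` is self-bounding if there are functions `g i`
not depending on the `i`-th coordinate such that `0 ≤ f(x) − g i x ≤ 1` for all
`x, i` and `∑ᵢ (f(x) − g i x) ≤ f(x)` for all `x`. -/
def SelfBounding {n : ℕ} (f : (Fin n → Bool) → ℝ) : Prop :=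
  ∃ g : Fin n → (Fin n → Bool) → ℝ,
    (∀ (i : Fin n) (x : Fin n → Bool) (b : Bool),
      g i (Function.update x i b) = g i x) ∧
    (∀ (x : Fin n → Bool) (i : Fin n), 0 ≤ f x - g i x ∧ f x - g i x ≤ 1) ∧
    (∀ x : Fin n → Bool, ∑ i, (f x - g i x) ≤ f x)

namespace SBAux

open Finset Function

variable {n : ℕ} (p : Fin n → Bool → ℝ)


variable {n : ℕ} (p : Fin n → Bool → ℝ)

def W (x : Fin n → Bool) : ℝ := ∏ i, p i (x i)

def Ex (h : (Fin n → Bool) → ℝ) : ℝ := ∑ x, W p x * h x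

def Ei (i : Fin n) (h : (Fin n → Bool) → ℝ) (x : Fin n → Bool) : ℝ :=
  ∑ b, p i b * h (Function.update x i b)

variable (hp0 : ∀ i b, 0 ≤ p i b) (hp1 : ∀ i, p i false + p i true = 1)

lemma sum_bool' (f : Bool → ℝ) : ∑ b, f b = f false + f true := by
  simp [Fintype.sum_bool, add_comm]

include hp0 in
lemma W_nonneg (x : Fin n → Bool) : 0 ≤ W p x :=
  Finset.prod_nonneg fun i _ => hp0 i (x i)

include hp1 in
lemma sum_W : ∑ x, W p x = 1 := by
  have h2 : ∑ x ∈ Fintype.piFinset (fun _ : Fin n => (univ : Finset Bool)), ∏ i, p i (x i)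
      = ∏ i : Fin n, ∑ b, p i b := (Finset.prod_univ_sum _ _).symm
  rw [Fintype.piFinset_univ] at h2
  rw [show ∑ x, W p x = ∑ x : Fin n → Bool, ∏ i, p i (x i) from rfl, h2]
  rw [Finset.prod_eq_one]
  intro i _
  rw [sum_bool']; exact hp1 i

include hp0 in
lemma Ex_mono {h k : (Fin n → Bool) → ℝ} (hk : ∀ x, h x ≤ k x) : Ex p h ≤ Ex p k :=
  Finset.sum_le_sum fun x _ => mul_le_mul_of_nonneg_left (hk x) (W_nonneg p hp0 x)

include hp0 in
lemma Ex_nonneg {h : (Fin n → Bool) → ℝ} (hh : ∀ x, 0 ≤ h x) : 0 ≤ Ex p h :=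
  Finset.sum_nonneg fun x _ => mul_nonneg (W_nonneg p hp0 x) (hh x)

lemma Ex_add (h k : (Fin n → Bool) → ℝ) : Ex p (fun x => h x + k x) = Ex p h + Ex p k := by
  simp [Ex, mul_add, Finset.sum_add_distrib]

lemma Ex_smul (c : ℝ) (h : (Fin n → Bool) → ℝ) : Ex p (fun x => c * h x) = c * Ex p h := by
  simp [Ex, Finset.mul_sum]; congr 1; ext x; ring

include hp1 in
lemma Ei_const (i : Fin n) (c : ℝ) (x : Fin n → Bool) : Ei p i (fun _ => c) x = c := by
  simp only [Ei, sum_bool']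
  rw [← add_mul, hp1 i, one_mul]

include hp0 in
lemma Ei_mono (i : Fin n) {h k : (Fin n → Bool) → ℝ} (hk : ∀ y, h y ≤ k y) (x : Fin n → Bool) :
    Ei p i h x ≤ Ei p i k x :=
  Finset.sum_le_sum fun b _ => mul_le_mul_of_nonneg_left (hk _) (hp0 i b)

include hp0 hp1 in
lemma Ei_pos (i : Fin n) {h : (Fin n → Bool) → ℝ} (hh : ∀ y, 0 < h y) (x : Fin n → Bool) :
    0 < Ei p i h x := by
  have h1 := hp1 i
  rcases lt_or_ge 0 (p i false) with hb | hb
  · exact Finset.sum_pos' (fun b _ => mul_nonneg (hp0 i b) (hh _).le)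
      ⟨false, by simp, mul_pos hb (hh _)⟩
  · have hb' : 0 < p i true := by have := hp0 i false; linarith
    exact Finset.sum_pos' (fun b _ => mul_nonneg (hp0 i b) (hh _).le)
      ⟨true, by simp, mul_pos hb' (hh _)⟩

lemma Ei_invariant (i : Fin n) (h : (Fin n → Bool) → ℝ) (x : Fin n → Bool) (b : Bool) :
    Ei p i h (Function.update x i b) = Ei p i h x := by
  simp [Ei, Function.update_idem]

lemma W_update_mul (i : Fin n) (x : Fin n → Bool) (b : Bool) :
    W p (Function.update x i b) * p i (x i) = W p x * p i b := by
  have h1 : W p (Function.update x i b) = p i b * ∏ j ∈ univ.erase i, p j (x j) := by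
    rw [W, ← Finset.mul_prod_erase univ _ (Finset.mem_univ i)]
    simp only [Function.update_self]
    congr 1
    exact Finset.prod_congr rfl fun j hj =>
      by rw [Function.update_of_ne (Finset.ne_of_mem_erase hj)]
  have h2 : W p x = p i (x i) * ∏ j ∈ univ.erase i, p j (x j) := by
    rw [W, ← Finset.mul_prod_erase univ _ (Finset.mem_univ i)]
  rw [h1, h2]; ring

include hp1 in
/-- the tower property -/
lemma Ex_Ei (i : Fin n) (h : (Fin n → Bool) → ℝ) : Ex p (Ei p i h) = Ex p h := by
  classical
  have hσ : Function.Involutive (fun z : (Fin n → Bool) × Bool =>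
      (Function.update z.1 i z.2, z.1 i)) := by
    intro z
    simp [Function.update_idem, Function.update_eq_self]
  have key : ∑ z : (Fin n → Bool) × Bool, W p z.1 * p i z.2 * h (Function.update z.1 i z.2)
      = ∑ z : (Fin n → Bool) × Bool, W p z.1 * p i z.2 * h z.1 := by
    refine Fintype.sum_equiv hσ.toPerm _ _ (fun z => ?_)
    simp only [Function.Involutive.coe_toPerm, Function.update_idem, Function.update_eq_self]
    have := W_update_mul p i z.1 z.2
    rw [← this]
  have l1 : Ex p (Ei p i h)
      = ∑ z : (Fin n → Bool) × Bool, W p z.1 * p i z.2 * h (Function.update z.1 i z.2) := by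
    rw [Ex, Fintype.sum_prod_type]
    refine Finset.sum_congr rfl fun x _ => ?_
    rw [Ei, Finset.mul_sum]
    exact Finset.sum_congr rfl fun b _ => (mul_assoc _ _ _).symm
  have l2 : ∑ z : (Fin n → Bool) × Bool, W p z.1 * p i z.2 * h z.1 = Ex p h := by
    rw [Fintype.sum_prod_type]
    refine Finset.sum_congr rfl fun x _ => ?_
    rw [sum_bool']
    linear_combination (W p x * h x) * (hp1 i)
  rw [l1, key, l2]


/-- iterated partial expectation over coordinates `< k` -/
def Ak (h : (Fin n → Bool) → ℝ) : ℕ → (Fin n → Bool) → ℝ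
  | 0 => h
  | (k+1) => if hk : k < n then Ei p ⟨k, hk⟩ (Ak h k) else Ak h k


include hp0 hp1 in
lemma Ak_pos {h : (Fin n → Bool) → ℝ} (hh : ∀ y, 0 < h y) :
    ∀ k x, 0 < Ak p h k x := by
  intro k
  induction k with
  | zero => exact hh
  | succ k ih =>
    intro x
    rw [Ak]
    split
    · exact Ei_pos p hp0 hp1 _ ih x
    · exact ih x

lemma Ak_invariant (h : (Fin n → Bool) → ℝ) :
    ∀ (k : ℕ) (j : Fin n), (j : ℕ) < k → ∀ x b, Ak p h k (Function.update x j b) = Ak p h k x := by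
  intro k
  induction k with
  | zero => intro j hj; omega
  | succ k ih =>
    intro j hj x b
    rw [Ak]
    split
    · rename_i hk
      rcases eq_or_lt_of_le (Nat.lt_succ_iff.mp hj) with he | hlt
      · have : j = ⟨k, hk⟩ := Fin.ext he
        subst this
        exact Ei_invariant p _ _ x b
      · -- j < k, commute update through Ei
        have hne : (⟨k, hk⟩ : Fin n) ≠ j := by
          intro hcon; rw [← hcon] at hlt; simp at hlt
        rw [Ei, Ei]
        refine Finset.sum_congr rfl fun c _ => ?_
        rw [Function.update_comm hne.symm]
        rw [ih j hlt]
    · rcases eq_or_lt_of_le (Nat.lt_succ_iff.mp hj) with he | hlt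
      · rename_i hk; exfalso; exact hk (he ▸ j.isLt)
      · exact ih j hlt x b

include hp1 in
lemma Ex_Ak (h : (Fin n → Bool) → ℝ) (k : ℕ) : Ex p (Ak p h k) = Ex p h := by
  induction k with
  | zero => rfl
  | succ k ih =>
    rw [Ak]
    split
    · rw [Ex_Ei p hp1, ih]
    · exact ih

include hp1 in
lemma Ak_top (h : (Fin n → Bool) → ℝ) (x : Fin n → Bool) : Ak p h n x = Ex p h := by
  classical
  -- Ak p h n is constant
  have hconst : ∀ y, Ak p h n y = Ak p h n x := by
    intro y
    have hs : ∀ s : Finset (Fin n), Ak p h n (s.piecewise y x) = Ak p h n x := by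
      intro s
      induction s using Finset.induction with
      | empty => simp
      | @insert j s hjs ih =>
        rw [Finset.piecewise_insert]
        rw [Ak_invariant p h n j j.isLt]
        exact ih
    have := hs Finset.univ
    rwa [Finset.piecewise_univ] at this
  have : Ex p (Ak p h n) = Ak p h n x := by
    rw [Ex]
    rw [show ∑ y, W p y * Ak p h n y = ∑ y, W p y * Ak p h n x from
      Finset.sum_congr rfl fun y _ => by rw [hconst y]]
    rw [← Finset.sum_mul, sum_W p hp1, one_mul]
  rw [← this, Ex_Ak p hp1]


/-- Young-type inequality `a*b ≤ a log a − a + e^b` for `a ≥ 0`. -/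
lemma young (a b : ℝ) (ha : 0 ≤ a) :
    a * b ≤ a * Real.log a - a + Real.exp b := by
  rcases eq_or_lt_of_le ha with h0 | ha
  · simp [← h0]; positivity
  · have h1 := Real.add_one_le_exp (b - Real.log a)
    have h2 : Real.exp (b - Real.log a) = Real.exp b / a := by
      rw [Real.exp_sub, Real.exp_log ha]
    rw [h2] at h1
    have h3 : (b - Real.log a + 1) * a ≤ (Real.exp b / a) * a :=
      mul_le_mul_of_nonneg_right h1 ha.le
    rw [div_mul_cancel₀ _ (ne_of_gt ha)] at h3
    nlinarith
/-- `t log w + t − w ≤ t log t` for positive `t, w`. -/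
lemma log_lb (t w : ℝ) (ht : 0 < t) (hw : 0 < w) :
    t * Real.log w + t - w ≤ t * Real.log t := by
  have h1 : Real.log (w / t) ≤ w / t - 1 := Real.log_le_sub_one_of_pos (by positivity)
  rw [Real.log_div (ne_of_gt hw) (ne_of_gt ht)] at h1
  have h3 : (Real.log w - Real.log t) * t ≤ (w / t - 1) * t :=
    mul_le_mul_of_nonneg_right h1 ht.le
  have h4 : (w / t - 1) * t = w - t := by field_simp
  nlinarith

/-- convexity consequence: `tu − 1 + e^{−tu} ≤ u(t − 1 + e^{−t})` for `u ∈ [0,1]`. -/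
lemma conv_exp (t u : ℝ) (h0 : 0 ≤ u) (h1 : u ≤ 1) :
    t * u - 1 + Real.exp (-(t * u)) ≤ u * (t - 1 + Real.exp (-t)) := by
  have hc := convexOn_exp.2 (Set.mem_univ (0:ℝ)) (Set.mem_univ (-t))
    (by linarith : (0:ℝ) ≤ 1 - u) h0 (by ring)
  simp only [smul_eq_mul, mul_zero, zero_add, Real.exp_zero] at hc
  have : Real.exp (u * -t) ≤ 1 - u + u * Real.exp (-t) := by
    linarith [hc]
  have he : Real.exp (-(t*u)) = Real.exp (u * -t) := by ring_nf
  rw [he]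
  nlinarith

lemma Ei_add (i : Fin n) (h k : (Fin n → Bool) → ℝ) (x : Fin n → Bool) :
    Ei p i (fun y => h y + k y) x = Ei p i h x + Ei p i k x := by
  simp [Ei, mul_add, Finset.sum_add_distrib]

lemma Ei_smul (i : Fin n) (c : ℝ) (h : (Fin n → Bool) → ℝ) (x : Fin n → Bool) :
    Ei p i (fun y => c * h y) x = c * Ei p i h x := by
  simp only [Ei]
  rw [Finset.mul_sum]
  exact Finset.sum_congr rfl fun b _ => by ring

variable (hp0 : ∀ i b, 0 ≤ p i b) (hp1 : ∀ i, p i false + p i true = 1)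

include hp0 hp1 in
/-- duality / variational bound for one-coordinate entropy -/
lemma Ei_duality (i : Fin n) (x : Fin n → Bool) {k v : (Fin n → Bool) → ℝ}
    (hk : ∀ y, 0 < k y) (hv : Ei p i (fun y => Real.exp (v y)) x ≤ 1) :
    Ei p i (fun y => k y * v y) x
      ≤ Ei p i (fun y => k y * Real.log (k y)) x - Ei p i k x * Real.log (Ei p i k x) := by
  set K := Ei p i k x with hK
  have hKpos : 0 < K := Ei_pos p hp0 hp1 i hk x
  have point : ∀ y, k y * v y ≤ k y * Real.log (k y)
      + ((- Real.log K - 1) * k y + K * Real.exp (v y)) := by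
    intro y
    have hy := young (k y / K) (v y) (le_of_lt (div_pos (hk y) hKpos))
    rw [Real.log_div (ne_of_gt (hk y)) (ne_of_gt hKpos)] at hy
    have := mul_le_mul_of_nonneg_left hy hKpos.le
    have hne := ne_of_gt hKpos
    field_simp at this
    nlinarith [this]
  calc Ei p i (fun y => k y * v y) x
      ≤ Ei p i (fun y => k y * Real.log (k y)
          + ((- Real.log K - 1) * k y + K * Real.exp (v y))) x :=
        Ei_mono p hp0 i point x
    _ = Ei p i (fun y => k y * Real.log (k y)) x
        + ((- Real.log K - 1) * K + K * Ei p i (fun y => Real.exp (v y)) x) := by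
        rw [Ei_add p i _ (fun y => (- Real.log K - 1) * k y + K * Real.exp (v y)),
          Ei_add p i (fun y => (- Real.log K - 1) * k y),
          Ei_smul, Ei_smul, ← hK]
    _ ≤ Ei p i (fun y => k y * Real.log (k y)) x - K * Real.log K := by
        have : K * Ei p i (fun y => Real.exp (v y)) x ≤ K * 1 :=
          mul_le_mul_of_nonneg_left hv hKpos.le
        nlinarith




include hp0 hp1 in
lemma Ex_pos {h : (Fin n → Bool) → ℝ} (hh : ∀ y, 0 < h y) : 0 < Ex p h := by
  obtain ⟨x, hx⟩ : ∃ x, W p x ≠ 0 := by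
    by_contra hc
    push_neg at hc
    have h1 := sum_W p hp1
    simp only [hc, Finset.sum_const_zero] at h1
    norm_num at h1
  exact Finset.sum_pos' (fun y _ => mul_nonneg (W_nonneg p hp0 y) (hh y).le)
    ⟨x, Finset.mem_univ x, mul_pos ((W_nonneg p hp0 x).lt_of_ne (Ne.symm hx)) (hh x)⟩

lemma Ex_finsum (h : Fin n → (Fin n → Bool) → ℝ) :
    Ex p (fun y => ∑ i, h i y) = ∑ i, Ex p (h i) := by
  simp only [Ex, Finset.mul_sum]
  rw [Finset.sum_comm]

include hp0 hp1 in
/-- single-coordinate entropy bound for `h = exp (t f)` -/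
lemma ent_coord_bound (f g : (Fin n → Bool) → ℝ) (i : Fin n)
    (hg_inv : ∀ x b, g (Function.update x i b) = g x)
    (hg01 : ∀ y, 0 ≤ f y - g y ∧ f y - g y ≤ 1)
    (t : ℝ) (x : Fin n → Bool) :
    Ei p i (fun y => Real.exp (t * f y) * Real.log (Real.exp (t * f y))) x
      - Ei p i (fun y => Real.exp (t * f y)) x
          * Real.log (Ei p i (fun y => Real.exp (t * f y)) x)
      ≤ (Real.exp (-t) + t - 1)
          * Ei p i (fun y => (f y - g y) * Real.exp (t * f y)) x := by
  set h : (Fin n → Bool) → ℝ := fun y => Real.exp (t * f y) with hh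
  have hpos : ∀ y, 0 < h y := fun y => Real.exp_pos _
  set K := Ei p i h x with hK
  have hKpos : 0 < K := Ei_pos p hp0 hp1 i hpos x
  set w := Real.exp (t * g x) with hw
  have hwpos : 0 < w := Real.exp_pos _
  have hlb := log_lb K w hKpos hwpos
  -- linearize the middle expression
  have lin : Ei p i (fun y => h y * Real.log (h y)) x - K * Real.log w - K + w
      = Ei p i (fun y => h y * Real.log (h y)
          + ((-Real.log w - 1) * h y + w)) x := by
    rw [Ei_add p i _ (fun y => (-Real.log w - 1) * h y + w),
      Ei_add p i (fun y => (-Real.log w - 1) * h y), Ei_smul,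
      Ei_const p hp1 i w x, ← hK]
    ring
  -- pointwise bound on the linearized expression, along coordinate i
  have ptw : Ei p i (fun y => h y * Real.log (h y) + ((-Real.log w - 1) * h y + w)) x
      ≤ Ei p i (fun y => (Real.exp (-t) + t - 1) * ((f y - g y) * h y)) x := by
    simp only [Ei]
    refine Finset.sum_le_sum fun b _ => mul_le_mul_of_nonneg_left ?_ (hp0 i b)
    set y := Function.update x i b with hy
    have hgy : g y = g x := hg_inv x b
    obtain ⟨hu0, hu1⟩ := hg01 y
    have hconv := conv_exp t (f y - g y) hu0 hu1
    have hmul := mul_le_mul_of_nonneg_left hconv (hpos y).le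
    have hweq : w = h y * Real.exp (-(t * (f y - g y))) := by
      rw [hw, hh, ← Real.exp_add, ← hgy]
      congr 1
      ring
    have hlog : Real.log (h y) = t * f y := Real.log_exp _
    rw [hlog, hweq]
    have hlogw : Real.log w = t * g y := by rw [hw, Real.log_exp, hgy]
    rw [hweq] at hlogw
    nlinarith [hmul, hpos y]
  calc Ei p i (fun y => h y * Real.log (h y)) x - K * Real.log K
      ≤ Ei p i (fun y => h y * Real.log (h y)) x - K * Real.log w - K + w := by
        linarith
    _ = Ei p i (fun y => h y * Real.log (h y) + ((-Real.log w - 1) * h y + w)) x := lin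
    _ ≤ Ei p i (fun y => (Real.exp (-t) + t - 1) * ((f y - g y) * h y)) x := ptw
    _ = (Real.exp (-t) + t - 1) * Ei p i (fun y => (f y - g y) * h y) x := Ei_smul p i _ _ x



include hp0 hp1 in
/-- The key differential inequality `(1 − e^{−t}) D(t) ≤ F(t) log F(t)`. -/
lemma key_ineq (f : (Fin n → Bool) → ℝ) (g : Fin n → (Fin n → Bool) → ℝ)
    (hg_inv : ∀ (i : Fin n) (x : Fin n → Bool) (b : Bool),
      g i (Function.update x i b) = g i x)
    (hg01 : ∀ (x : Fin n → Bool) (i : Fin n), 0 ≤ f x - g i x ∧ f x - g i x ≤ 1)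
    (hgsum : ∀ x : Fin n → Bool, ∑ i, (f x - g i x) ≤ f x)
    (t : ℝ) :
    (1 - Real.exp (-t)) * Ex p (fun y => f y * Real.exp (t * f y))
      ≤ Ex p (fun y => Real.exp (t * f y))
          * Real.log (Ex p (fun y => Real.exp (t * f y))) := by
  set h : (Fin n → Bool) → ℝ := fun y => Real.exp (t * f y) with hh
  have hpos : ∀ y, 0 < h y := fun y => Real.exp_pos _
  set F := Ex p h with hF
  have hFpos : 0 < F := Ex_pos p hp0 hp1 hpos
  have hAk : ∀ k y, 0 < Ak p h k y := fun k y => Ak_pos p hp0 hp1 hpos k y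
  set ψ := Real.exp (-t) + t - 1 with hψ
  have hψ0 : 0 ≤ ψ := by
    have := Real.add_one_le_exp (-t)
    simp only [hψ]; linarith
  set U : Fin n → (Fin n → Bool) → ℝ :=
    fun i y => Real.log (Ak p h (i : ℕ) y) - Real.log (Ak p h ((i : ℕ) + 1) y) with hU
  -- telescoping
  have tele : ∀ y, h y * (Real.log (h y) - Real.log F)
      = ∑ i : Fin n, h y * U i y := by
    intro y
    rw [← Finset.mul_sum]
    congr 1
    rw [Fin.sum_univ_eq_sum_range
      (fun i => Real.log (Ak p h i y) - Real.log (Ak p h (i + 1) y)) n]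
    rw [Finset.sum_range_sub' (fun i => Real.log (Ak p h i y)) n]
    rw [Ak_top p hp1 h y]
    rfl
  -- entropy decomposition
  have ent_eq : t * Ex p (fun y => f y * h y) - F * Real.log F
      = ∑ i : Fin n, Ex p (fun y => h y * U i y) := by
    rw [← Ex_finsum p (fun i y => h y * U i y)]
    rw [show (fun y => ∑ i : Fin n, h y * U i y)
        = fun y => h y * (Real.log (h y) - Real.log F) from funext fun y => (tele y).symm]
    have : (fun y => h y * (Real.log (h y) - Real.log F))
        = fun y => t * (f y * h y) + (-Real.log F) * h y := by
      funext y
      rw [hh]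
      rw [Real.log_exp]
      ring
    rw [this, Ex_add, Ex_smul, Ex_smul, ← hF]
    ring
  -- per-coordinate bound
  have per_i : ∀ i : Fin n, Ex p (fun y => h y * U i y)
      ≤ ψ * Ex p (fun y => (f y - g i y) * h y) := by
    intro i
    have hEiv : ∀ x, Ei p i (fun y => Real.exp (U i y)) x ≤ 1 := by
      intro x
      have hexpU : ∀ y, Real.exp (U i y)
          = Ak p h (i : ℕ) y * (Ak p h ((i : ℕ) + 1) y)⁻¹ := by
        intro y
        rw [hU]
        rw [Real.exp_sub, Real.exp_log (hAk _ y), Real.exp_log (hAk _ y), div_eq_mul_inv]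
      have hsucc : Ak p h ((i : ℕ) + 1) x = Ei p i (Ak p h (i : ℕ)) x := by
        rw [Ak]
        rw [dif_pos i.isLt]
      have : Ei p i (fun y => Real.exp (U i y)) x
          = Ei p i (Ak p h (i : ℕ)) x * (Ak p h ((i : ℕ) + 1) x)⁻¹ := by
        simp only [Ei]
        rw [Finset.sum_mul]
        refine Finset.sum_congr rfl fun b _ => ?_
        rw [hexpU]
        rw [Ak_invariant p h ((i : ℕ) + 1) i (Nat.lt_succ_self _) x b]
        ring
      rw [this, ← hsucc, mul_inv_cancel₀ (ne_of_gt (hAk ((i : ℕ) + 1) x))]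
    calc Ex p (fun y => h y * U i y) = Ex p (Ei p i (fun y => h y * U i y)) :=
          (Ex_Ei p hp1 i _).symm
      _ ≤ Ex p (fun x => ψ * Ei p i (fun y => (f y - g i y) * h y) x) := by
          refine Ex_mono p hp0 fun x => ?_
          have d1 := Ei_duality p hp0 hp1 i x hpos (hEiv x)
          have d2 := ent_coord_bound p hp0 hp1 f (g i) i (hg_inv i)
            (fun y => hg01 y i) t x
          calc Ei p i (fun y => h y * U i y) x
              ≤ Ei p i (fun y => h y * Real.log (h y)) x
                - Ei p i h x * Real.log (Ei p i h x) := d1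
            _ ≤ ψ * Ei p i (fun y => (f y - g i y) * h y) x := d2
      _ = ψ * Ex p (Ei p i (fun y => (f y - g i y) * h y)) := Ex_smul p ψ _
      _ = ψ * Ex p (fun y => (f y - g i y) * h y) := by rw [Ex_Ei p hp1]
  -- sum up
  have sum_bound : ∑ i : Fin n, Ex p (fun y => h y * U i y)
      ≤ ψ * Ex p (fun y => f y * h y) := by
    calc ∑ i : Fin n, Ex p (fun y => h y * U i y)
        ≤ ∑ i : Fin n, ψ * Ex p (fun y => (f y - g i y) * h y) :=
          Finset.sum_le_sum fun i _ => per_i i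
      _ = ψ * Ex p (fun y => ∑ i, ((f y - g i y) * h y)) := by
          rw [Ex_finsum p (fun i y => (f y - g i y) * h y), Finset.mul_sum]
      _ ≤ ψ * Ex p (fun y => f y * h y) := by
          refine mul_le_mul_of_nonneg_left (Ex_mono p hp0 fun y => ?_) hψ0
          rw [← Finset.sum_mul]
          exact mul_le_mul_of_nonneg_right (hgsum y) (hpos y).le
  have final := ent_eq ▸ sum_bound
  have hD : t * Ex p (fun y => f y * h y) - F * Real.log F
      ≤ ψ * Ex p (fun y => f y * h y) := by rw [ent_eq]; exact sum_bound
  have : (1 - Real.exp (-t)) * Ex p (fun y => f y * h y) ≤ F * Real.log F := by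
    rw [hψ] at hD
    nlinarith [hD]
  exact this



lemma hasDerivAt_F (f : (Fin n → Bool) → ℝ) (t : ℝ) :
    HasDerivAt (fun s => Ex p (fun y => Real.exp (s * f y)))
      (Ex p (fun y => f y * Real.exp (t * f y))) t := by
  have : ∀ x : Fin n → Bool,
      HasDerivAt (fun s => W p x * Real.exp (s * f x))
        (W p x * (f x * Real.exp (t * f x))) t := by
    intro x
    have h1 : HasDerivAt (fun s : ℝ => s * f x) (f x) t := hasDerivAt_mul_const (f x)
    have h2 := h1.exp
    have h3 := h2.const_mul (W p x)
    rw [show W p x * (f x * Real.exp (t * f x)) = W p x * (Real.exp (t * f x) * f x) by ring]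
    exact h3
  have hsum := HasDerivAt.fun_sum (fun x (_ : x ∈ Finset.univ) => this x)
  exact hsum

include hp0 hp1 in
lemma mgf_bound (f : (Fin n → Bool) → ℝ) (g : Fin n → (Fin n → Bool) → ℝ)
    (hg_inv : ∀ (i : Fin n) (x : Fin n → Bool) (b : Bool),
      g i (Function.update x i b) = g i x)
    (hg01 : ∀ (x : Fin n → Bool) (i : Fin n), 0 ≤ f x - g i x ∧ f x - g i x ≤ 1)
    (hgsum : ∀ x : Fin n → Bool, ∑ i, (f x - g i x) ≤ f x)
    (lam : ℝ) (hlam : 0 < lam) :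
    Real.log (Ex p (fun y => Real.exp (lam * f y)))
      ≤ Ex p f * (Real.exp lam - 1) := by
  set F : ℝ → ℝ := fun t => Ex p (fun y => Real.exp (t * f y)) with hFdef
  set D : ℝ → ℝ := fun t => Ex p (fun y => f y * Real.exp (t * f y)) with hDdef
  have hFd : ∀ t, HasDerivAt F (D t) t := fun t => hasDerivAt_F p f t
  have hFpos : ∀ t, 0 < F t := fun t => Ex_pos p hp0 hp1 (fun y => Real.exp_pos _)
  set m := Ex p f with hm
  have hF0 : F 0 = 1 := by
    have : (fun y : Fin n → Bool => Real.exp (0 * f y)) = fun _ => (1:ℝ) := by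
      funext y; rw [zero_mul, Real.exp_zero]
    rw [hFdef]
    show Ex p (fun y => Real.exp (0 * f y)) = 1
    rw [this]
    have := sum_W p hp1
    rw [Ex]
    simpa using this
  have hD0 : D 0 = m := by
    rw [hDdef, hm]
    show Ex p (fun y => f y * Real.exp (0 * f y)) = Ex p f
    congr 1
    funext y
    rw [zero_mul, Real.exp_zero, mul_one]
  set G : ℝ → ℝ := fun t => Real.log (F t) with hGdef
  have hGd : ∀ t, HasDerivAt G (D t / F t) t := fun t => (hFd t).log (ne_of_gt (hFpos t))
  have hG0 : G 0 = 0 := by rw [hGdef]; show Real.log (F 0) = 0; rw [hF0, Real.log_one]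
  set k : ℝ → ℝ := fun t => Real.exp t - 1 with hkdef
  have hkd : ∀ t, HasDerivAt k (Real.exp t) t := by
    intro t
    have := (Real.hasDerivAt_exp t).sub_const 1
    exact this
  have hkpos : ∀ t, 0 < t → 0 < k t := by
    intro t ht
    have h1 := Real.add_one_le_exp t
    simp only [hkdef]; linarith
  set H : ℝ → ℝ := fun t => G t / k t with hHdef
  have hHd : ∀ t, 0 < t → HasDerivAt H
      ((D t / F t * k t - G t * Real.exp t) / (k t)^2) t := by
    intro t ht
    exact (hGd t).div (hkd t) (ne_of_gt (hkpos t ht))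
  -- derivative is nonpositive
  have hH'le : ∀ t, 0 < t → (D t / F t * k t - G t * Real.exp t) / (k t)^2 ≤ 0 := by
    intro t ht
    apply div_nonpos_of_nonpos_of_nonneg _ (sq_nonneg _)
    have hkey' : (1 - Real.exp (-t)) * D t ≤ F t * G t :=
      key_ineq p hp0 hp1 f g hg_inv hg01 hgsum t
    have hexp : (1 - Real.exp (-t)) * Real.exp t = Real.exp t - 1 := by
      rw [Real.exp_neg]
      field_simp
    have h2 : (1 - Real.exp (-t)) * D t * Real.exp t ≤ F t * G t * Real.exp t :=
      mul_le_mul_of_nonneg_right hkey' (Real.exp_pos t).le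
    have h3 : (Real.exp t - 1) * D t ≤ F t * G t * Real.exp t := by
      have he : (Real.exp t - 1) * D t = (1 - Real.exp (-t)) * D t * Real.exp t := by
        rw [← hexp]; ring
      rw [he]; exact h2
    rw [sub_nonpos, div_mul_eq_mul_div, div_le_iff₀ (hFpos t)]
    calc D t * k t = (Real.exp t - 1) * D t := by rw [hkdef]; ring
      _ ≤ F t * G t * Real.exp t := h3
      _ = G t * Real.exp t * F t := by ring
  -- antitone on positive reals
  have hanti : ∀ a b, 0 < a → a ≤ b → H b ≤ H a := by
    intro a b ha hab
    have hsub : Set.Icc a b ⊆ Set.Ioi 0 := fun x hx => lt_of_lt_of_le ha hx.1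
    have hcont : ContinuousOn H (Set.Icc a b) := fun x hx =>
      ((hHd x (hsub hx)).differentiableAt).continuousAt.continuousWithinAt
    have hderiv : ∀ x ∈ interior (Set.Icc a b), deriv H x ≤ 0 := by
      intro x hx
      rw [interior_Icc] at hx
      have hx0 : 0 < x := lt_trans ha hx.1
      rw [(hHd x hx0).deriv]
      exact hH'le x hx0
    have := antitoneOn_of_deriv_nonpos (convex_Icc a b) hcont
      (fun x hx => by
        rw [interior_Icc] at hx
        exact ((hHd x (lt_trans ha hx.1)).differentiableAt).differentiableWithinAt) hderiv
    exact this ⟨le_refl a, hab⟩ ⟨hab, le_refl b⟩ hab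
  -- limit of H at 0+ is m
  have hGlim : Filter.Tendsto (fun t => G t / t) (nhdsWithin 0 {(0:ℝ)}ᶜ) (nhds m) := by
    have := (hasDerivAt_iff_tendsto_slope.mp (hGd 0))
    rw [hF0, hD0] at this
    simp only [div_one] at this
    have heq : slope G 0 = fun t => G t / t := by
      funext t
      rw [slope_def_field, hG0]
      simp
    rwa [heq] at this
  have hklim : Filter.Tendsto (fun t => k t / t) (nhdsWithin 0 {(0:ℝ)}ᶜ) (nhds 1) := by
    have := (hasDerivAt_iff_tendsto_slope.mp (hkd 0))
    rw [Real.exp_zero] at this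
    have heq : slope k 0 = fun t => k t / t := by
      funext t
      rw [slope_def_field]
      have : k 0 = 0 := by simp [hkdef]
      rw [this]
      simp
    rwa [heq] at this
  have hHlim : Filter.Tendsto H (nhdsWithin 0 (Set.Ioi 0)) (nhds m) := by
    have hdiv := hGlim.div hklim one_ne_zero
    simp only [div_one] at hdiv
    have hmono : nhdsWithin (0:ℝ) (Set.Ioi 0) ≤ nhdsWithin 0 {(0:ℝ)}ᶜ :=
      nhdsWithin_mono 0 (fun x hx => ne_of_gt hx)
    have hdiv' := hdiv.mono_left hmono
    apply hdiv'.congr'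
    filter_upwards [self_mem_nhdsWithin] with t ht
    have ht0 : t ≠ 0 := ne_of_gt ht
    rw [hHdef]
    show G t / t / (k t / t) = G t / k t
    field_simp
  -- conclude
  have hfinal : H lam ≤ m := by
    apply ge_of_tendsto hHlim
    filter_upwards [Ioo_mem_nhdsGT_of_mem (Set.left_mem_Ico.mpr hlam)] with t ht
    exact hanti t lam ht.1 ht.2.le
  have hk : 0 < k lam := hkpos lam hlam
  have := (div_le_iff₀ hk).mp hfinal
  calc Real.log (Ex p (fun y => Real.exp (lam * f y))) = G lam := rfl
    _ ≤ m * k lam := this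
    _ = Ex p f * (Real.exp lam - 1) := by rw [hm, hkdef]



include hp0 hp1 in
theorem tail_core (f : (Fin n → Bool) → ℝ) (g : Fin n → (Fin n → Bool) → ℝ)
    (hg_inv : ∀ (i : Fin n) (x : Fin n → Bool) (b : Bool),
      g i (Function.update x i b) = g i x)
    (hg01 : ∀ (x : Fin n → Bool) (i : Fin n), 0 ≤ f x - g i x ∧ f x - g i x ≤ 1)
    (hgsum : ∀ x : Fin n → Bool, ∑ i, (f x - g i x) ≤ f x)
    (δ : ℝ) (hδ : 0 < δ) :
    ∑ x ∈ Finset.univ.filter (fun x => (1 + δ) * Ex p f ≤ f x), W p x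
      ≤ (Real.exp δ / (1 + δ) ^ (1 + δ)) ^ (Ex p f) := by
  have hf0 : ∀ y, 0 ≤ f y := by
    intro y
    refine le_trans (Finset.sum_nonneg fun i _ => (hg01 y i).1) (hgsum y)
  set m := Ex p f with hm
  have hm0 : 0 ≤ m := Ex_nonneg p hp0 hf0
  have h1δ : (0:ℝ) < 1 + δ := by linarith
  set lam := Real.log (1 + δ) with hlam
  have hlam0 : 0 < lam := Real.log_pos (by linarith)
  have hexplam : Real.exp lam = 1 + δ := Real.exp_log h1δ
  -- Chernoff step
  have step1 : ∑ x ∈ Finset.univ.filter (fun x => (1 + δ) * m ≤ f x), W p x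
      ≤ Ex p (fun x => Real.exp (lam * (f x - (1 + δ) * m))) := by
    rw [Ex]
    refine le_trans (Finset.sum_le_sum fun x hx => ?_)
      (Finset.sum_le_sum_of_subset_of_nonneg (Finset.filter_subset _ _)
        (fun x _ _ => mul_nonneg (W_nonneg p hp0 x) (Real.exp_pos _).le))
    rw [Finset.mem_filter] at hx
    have hge : 0 ≤ lam * (f x - (1 + δ) * m) :=
      mul_nonneg hlam0.le (by linarith [hx.2])
    have := Real.one_le_exp hge
    nlinarith [W_nonneg p hp0 x]
  have step2 : Ex p (fun x => Real.exp (lam * (f x - (1 + δ) * m)))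
      = Real.exp (-(lam * (1 + δ) * m)) * Ex p (fun x => Real.exp (lam * f x)) := by
    calc Ex p (fun x => Real.exp (lam * (f x - (1 + δ) * m)))
        = Ex p (fun x => Real.exp (-(lam * (1 + δ) * m)) * Real.exp (lam * f x)) := by
          congr 1
          funext x
          rw [← Real.exp_add]
          congr 1
          ring
      _ = Real.exp (-(lam * (1 + δ) * m)) * Ex p (fun x => Real.exp (lam * f x)) :=
          Ex_smul p _ _
  have step3 : Ex p (fun x => Real.exp (lam * f x)) ≤ Real.exp (m * δ) := by
    have := mgf_bound p hp0 hp1 f g hg_inv hg01 hgsum lam hlam0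
    rw [hexplam] at this
    have he : Ex p f * (1 + δ - 1) = Ex p f * δ := by ring
    rw [he] at this
    have h2 : Real.log (Ex p fun y => Real.exp (lam * f y)) ≤ m * δ := by
      rw [hm]; exact this
    have hpos : 0 < Ex p (fun y => Real.exp (lam * f y)) :=
      Ex_pos p hp0 hp1 (fun y => Real.exp_pos _)
    rwa [← Real.log_le_iff_le_exp hpos]
  have hrhs : (Real.exp δ / (1 + δ) ^ (1 + δ)) ^ m
      = Real.exp (m * δ - lam * (1 + δ) * m) := by
    rw [Real.rpow_def_of_pos (by positivity)]
    congr 1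
    rw [Real.log_div (by positivity) (by positivity)]
    rw [Real.log_exp, Real.log_rpow h1δ]
    ring
  calc ∑ x ∈ Finset.univ.filter (fun x => (1 + δ) * m ≤ f x), W p x
      ≤ Real.exp (-(lam * (1 + δ) * m)) * Ex p (fun x => Real.exp (lam * f x)) := by
        rw [← step2]; exact step1
    _ ≤ Real.exp (-(lam * (1 + δ) * m)) * Real.exp (m * δ) :=
        mul_le_mul_of_nonneg_left step3 (Real.exp_pos _).le
    _ = Real.exp (m * δ - lam * (1 + δ) * m) := by rw [← Real.exp_add]; congr 1; ring
    _ = (Real.exp δ / (1 + δ) ^ (1 + δ)) ^ m := hrhs.symm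


end SBAux

/-- Chernoff-type upper tail for self-bounding functions of independent
`{0,1}`-valued random variables:
`Pr[Z ≥ (1+δ) E Z] ≤ (e^δ / (1+δ)^{1+δ})^{E Z}` for every `δ > 0`. -/
theorem self_bounding_upper_tail
    {Ω : Type*} [MeasurableSpace Ω] (μ : Measure Ω) [IsProbabilityMeasure μ]
    {n : ℕ} (X : Fin n → Ω → Bool) (hXm : ∀ i, Measurable (X i))
    (hXind : iIndepFun X μ)
    (f : (Fin n → Bool) → ℝ) (hf : SelfBounding f)
    (Z : Ω → ℝ) (hZ : ∀ ω, Z ω = f (fun i => X i ω)) (δ : ℝ) (hδ : 0 < δ) :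
    (μ {ω | (1 + δ) * (∫ ω', Z ω' ∂μ) ≤ Z ω}).toReal
      ≤ (Real.exp δ / (1 + δ) ^ (1 + δ)) ^ (∫ ω', Z ω' ∂μ) := by
  classical
  obtain ⟨g, hg_inv, hg01, hgsum⟩ := hf
  set T : Ω → (Fin n → Bool) := fun ω i => X i ω with hT
  have hTm : Measurable T := measurable_pi_iff.mpr hXm
  set ν : Measure (Fin n → Bool) := μ.map T with hν
  have : IsProbabilityMeasure ν := Measure.isProbabilityMeasure_map hTm.aemeasurable
  set p : Fin n → Bool → ℝ := fun i b => (μ (X i ⁻¹' {b})).toReal with hp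
  have hp0 : ∀ i b, 0 ≤ p i b := fun i b => ENNReal.toReal_nonneg
  have hp1 : ∀ i, p i false + p i true = 1 := by
    intro i
    have hdisj : Disjoint (X i ⁻¹' {false}) (X i ⁻¹' {true}) := by
      apply Set.disjoint_left.mpr
      intro ω h1 h2
      simp only [Set.mem_preimage, Set.mem_singleton_iff] at h1 h2
      rw [h1] at h2; exact Bool.noConfusion h2
    have huniv : X i ⁻¹' {false} ∪ X i ⁻¹' {true} = Set.univ := by
      ext ω
      simp only [Set.mem_union, Set.mem_preimage, Set.mem_singleton_iff, Set.mem_univ,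
        iff_true]
      exact Bool.dichotomy (X i ω)
    have hsum1 : μ (X i ⁻¹' {false}) + μ (X i ⁻¹' {true}) = 1 := by
      rw [← measure_union hdisj ((hXm i) (measurableSet_singleton true)), huniv, measure_univ]
    rw [hp]
    simp only
    rw [← ENNReal.toReal_add (measure_ne_top μ _) (measure_ne_top μ _), hsum1,
      ENNReal.toReal_one]
  -- point masses
  have hpoint : ∀ x : Fin n → Bool, (ν {x}).toReal = SBAux.W p x := by
    intro x
    have hpre : T ⁻¹' {x} = ⋂ i, X i ⁻¹' {x i} := by
      ext ω
      simp only [Set.mem_preimage, Set.mem_singleton_iff, Set.mem_iInter, funext_iff]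
      rfl
    rw [hν, Measure.map_apply hTm (measurableSet_singleton x), hpre]
    rw [hXind.meas_iInter (fun i => ⟨{x i}, measurableSet_singleton _, rfl⟩)]
    rw [ENNReal.toReal_prod]
    rfl
  -- integral
  have hfm : Measurable f := measurable_of_countable f
  have hint : (∫ ω', Z ω' ∂μ) = SBAux.Ex p f := by
    have h1 : (∫ ω', Z ω' ∂μ) = ∫ ω', f (T ω') ∂μ := by
      congr 1; funext ω; exact hZ ω
    rw [h1, ← integral_map hTm.aemeasurable hfm.aestronglyMeasurable]
    rw [MeasureTheory.integral_fintype Integrable.of_finite]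
    rw [SBAux.Ex]
    refine Finset.sum_congr rfl fun x _ => ?_
    rw [Measure.real_def, hpoint x, smul_eq_mul, mul_comm]
  set m := ∫ ω', Z ω' ∂μ with hmdef
  -- tail probability as a finite sum
  have htail : (μ {ω | (1 + δ) * m ≤ Z ω}).toReal
      = ∑ x ∈ Finset.univ.filter (fun x => (1 + δ) * SBAux.Ex p f ≤ f x), SBAux.W p x := by
    have hset : {ω | (1 + δ) * m ≤ Z ω} = T ⁻¹' {x | (1 + δ) * m ≤ f x} := by
      ext ω
      simp only [Set.mem_setOf_eq, Set.mem_preimage, hZ ω]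
      rfl
    rw [hset, ← Measure.map_apply hTm MeasurableSet.of_discrete, ← hν]
    have hseteq : {x : Fin n → Bool | (1 + δ) * m ≤ f x}
        = ⋃ x ∈ Finset.univ.filter (fun x => (1 + δ) * SBAux.Ex p f ≤ f x), {x} := by
      ext x
      simp [hint]
    rw [hseteq, measure_biUnion_finset
      (fun a _ b _ hab => by
        simp only [Function.onFun]
        exact Set.disjoint_singleton.mpr hab)
      (fun x _ => MeasurableSet.of_discrete)]
    rw [ENNReal.toReal_sum (fun x _ => measure_ne_top ν _)]
    exact Finset.sum_congr rfl fun x _ => hpoint x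
  rw [htail, hint]
  exact SBAux.tail_core p hp0 hp1 f g hg_inv hg01 hgsum δ hδ
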